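/- arXiv:0910.2009 — 3 statements merged into one kernel-verified Lean document; each statement's English description precedes it below -/
import Mathlib

section
/- Let k be a field of characteristic 0, n > 2 an even integer, and let H = C₂(n, -1) be the Hopf algebra generated by a group-like element g and a (1, g)-primitive element x subject to gⁿ = 1, x² = 0, gx = -xg. Then every coquasitriangular structure R on H satisfies R(x, x) = 0; i.e., the coquasitriangular structure on C₂(n, -1) is unique and concentrates on the group algebra part. -/
open TensorProduct Coalgebra

section Defs
variable (k H : Type*) [CommSemiring k] [Semiring H] [Bialgebra k H]

/-- An element is group-like if it is counit-1 and comultiplies diagonally. -/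
def IsGroupLike (a : H) : Prop :=
  Coalgebra.counit (R := k) a = 1 ∧ Coalgebra.comul (R := k) a = a ⊗ₜ[k] a

/-- `x` is `(1,g)`-primitive (skew-primitive). -/
def IsSkewPrimitive (g x : H) : Prop :=
  Coalgebra.comul (R := k) x = g ⊗ₜ[k] x + x ⊗ₜ[k] (1 : H)

/-- Convolution product of two functionals on a coalgebra. -/
noncomputable def convProd {C : Type*} [AddCommMonoid C] [Module k C] [CoalgebraStruct k C]
    (f g : C →ₗ[k] k) : C →ₗ[k] k :=
  LinearMap.mul' k k ∘ₗ TensorProduct.map f g ∘ₗ Coalgebra.comul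

/-- Multiplication in the opposite order, `a ⊗ b ↦ b * a`. -/
noncomputable def swapMul : H ⊗[k] H →ₗ[k] H :=
  LinearMap.mul' k H ∘ₗ (TensorProduct.comm k H H).toLinearMap

/-- A coquasitriangular structure on a bialgebra `H`: a convolution-invertible
bilinear form `R : H × H → k` satisfying `R(ab,c) = R(a,c₁)R(b,c₂)`,
`R(a,bc) = R(a₁,c)R(a₂,b)` and `b₁a₁R(a₂,b₂) = R(a₁,b₁)a₂b₂`. -/
structure CoquasiTriangular where
  /-- the universal `R`-form, as a bilinear map -/
  R : H →ₗ[k] H →ₗ[k] k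
  /-- its convolution inverse -/
  Rbar : H →ₗ[k] H →ₗ[k] k
  inv_left : convProd k (TensorProduct.lift R) (TensorProduct.lift Rbar)
      = Coalgebra.counit (R := k) (A := H ⊗[k] H)
  inv_right : convProd k (TensorProduct.lift Rbar) (TensorProduct.lift R)
      = Coalgebra.counit (R := k) (A := H ⊗[k] H)
  prod_left : ∀ a b : H, R (a * b)
      = LinearMap.mul' k k ∘ₗ TensorProduct.map (R a) (R b) ∘ₗ Coalgebra.comul
  prod_right : ∀ b c : H, R.flip (b * c)
      = LinearMap.mul' k k ∘ₗ TensorProduct.map (R.flip c) (R.flip b) ∘ₗ Coalgebra.comul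
  comm : (TensorProduct.rid k H).toLinearMap
        ∘ₗ TensorProduct.map (swapMul k H) (TensorProduct.lift R)
        ∘ₗ Coalgebra.comul (R := k) (A := H ⊗[k] H)
      = (TensorProduct.lid k H).toLinearMap
        ∘ₗ TensorProduct.map (TensorProduct.lift R) (LinearMap.mul' k H)
        ∘ₗ Coalgebra.comul (R := k) (A := H ⊗[k] H)

end Defs

/-- For the generalized Taft algebra `C₂(n,-1)` (with `n > 2`
even, over a field of characteristic 0), every coquasitriangular structure `R`
satisfies `R(x,x) = 0` (and `R(g,x) = R(x,g) = 0`), i.e. it concentrates on the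
group algebra part. -/
theorem taft_coquasitriangular_Rxx_eq_zero (k H : Type*) [Field k] [CharZero k]
    [Ring H] [HopfAlgebra k H] (n : ℕ) (hn : 2 < n) (hneven : Even n)
    (g x : H) (hg : IsGroupLike k H g) (hx : IsSkewPrimitive k H g x)
    (hgn : g ^ n = 1) (hx2 : x * x = 0) (hgx : g * x = -(x * g))
    (hindep : LinearIndependent k
      (fun p : Fin n × Fin 2 => g ^ (p.1 : ℕ) * x ^ (p.2 : ℕ)))
    (hspan : ⊤ ≤ Submodule.span k
      (Set.range fun p : Fin n × Fin 2 => g ^ (p.1 : ℕ) * x ^ (p.2 : ℕ)))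
    (Q : CoquasiTriangular k H) :
    Q.R x x = 0 ∧ Q.R g x = 0 ∧ Q.R x g = 0 := by
  classical
  obtain ⟨hgε, hgΔ⟩ := hg
  have hxΔ : Coalgebra.comul (R := k) x = g ⊗ₜ[k] x + x ⊗ₜ[k] (1 : H) := hx
  -- R(x,g) = 0
  have hRxg : Q.R x g = 0 := by
    have h := LinearMap.congr_fun (Q.prod_left x x) g
    rw [hx2] at h
    simp only [map_zero, LinearMap.zero_apply, LinearMap.comp_apply, hgΔ,
      TensorProduct.map_tmul, LinearMap.mul'_apply] at h
    exact mul_self_eq_zero.mp h.symm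
  -- R(g,x) = 0
  have hRgx : Q.R g x = 0 := by
    have h := LinearMap.congr_fun (Q.prod_right x x) g
    rw [hx2] at h
    simp only [map_zero, LinearMap.zero_apply, LinearMap.comp_apply, hgΔ,
      TensorProduct.map_tmul, LinearMap.mul'_apply, LinearMap.flip_apply] at h
    exact mul_self_eq_zero.mp h.symm
  -- R(g^(m+1), x) = 0
  have hRgkx : ∀ m : ℕ, Q.R (g ^ (m + 1)) x = 0 := by
    intro m
    induction m with
    | zero => simpa using hRgx
    | succ m ih =>
      have h := LinearMap.congr_fun (Q.prod_left g (g ^ (m + 1))) x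
      rw [← pow_succ'] at h
      simp only [LinearMap.comp_apply, hxΔ, map_add, TensorProduct.map_tmul,
        LinearMap.mul'_apply, ih, hRgx, mul_zero, zero_mul, add_zero] at h
      simpa using h
  have hR1x : Q.R 1 x = 0 := by
    have : (1 : H) = g ^ ((n - 1) + 1) := by
      rw [Nat.sub_add_cancel (by omega), hgn]
    rw [this]; exact hRgkx _
  -- R(x, g^(m+1)) = 0
  have hRxgk : ∀ m : ℕ, Q.R x (g ^ (m + 1)) = 0 := by
    intro m
    induction m with
    | zero => simpa using hRxg
    | succ m ih =>
      have h := LinearMap.congr_fun (Q.prod_right g (g ^ (m + 1))) x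
      rw [← pow_succ'] at h
      simp only [LinearMap.comp_apply, hxΔ, map_add, TensorProduct.map_tmul,
        LinearMap.mul'_apply, LinearMap.flip_apply, ih, hRxg, mul_zero, zero_mul,
        add_zero] at h
      simpa using h
  have hRx1 : Q.R x 1 = 0 := by
    have : (1 : H) = g ^ ((n - 1) + 1) := by
      rw [Nat.sub_add_cancel (by omega), hgn]
    rw [this]; exact hRxgk _
  -- apply the commutation axiom at x ⊗ x
  have hcomm := LinearMap.congr_fun Q.comm (x ⊗ₜ[k] x)
  simp only [LinearMap.comp_apply, LinearEquiv.coe_coe,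
    TensorProduct.comul_tmul, hxΔ, TensorProduct.map_tmul,
    TensorProduct.tmul_add, TensorProduct.add_tmul, map_add,
    TensorProduct.tensorTensorTensorComm_tmul, AlgebraTensorModule.tensorTensorTensorComm_tmul, TensorProduct.rid_tmul,
    TensorProduct.lid_tmul, TensorProduct.lift.tmul, swapMul,
    TensorProduct.comm_tmul, LinearMap.mul'_apply, hRxg, hRgx, hRx1, hR1x,
    hx2, zero_smul, add_zero, zero_add, smul_zero, mul_one, one_mul] at hcomm
  -- hcomm : Q.R x x • (g * g) = Q.R x x • 1 (possibly up to arrangement)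
  have key : Q.R x x • (g * g) = Q.R x x • (1 : H) := by
    convert hcomm using 2 <;> simp
  have hpair : LinearIndependent k ![g * g, (1 : H)] := by
    have h2 : (2 : ℕ) < n := hn
    have hf : Function.Injective
        (![(⟨2, h2⟩, 0), (⟨0, by omega⟩, 0)] : Fin 2 → Fin n × Fin 2) := by
      intro i j hij
      fin_cases i <;> fin_cases j <;> simp_all [Fin.ext_iff]
    have := hindep.comp _ hf
    convert this using 1
    funext i
    fin_cases i <;> simp [pow_succ]
  have hδ := (LinearIndependent.pair_iff.mp hpair (Q.R x x) (-(Q.R x x))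
    (by rw [neg_smul, ← key, add_neg_cancel])).1
  exact ⟨hδ, hRgx, hRxg⟩
end

section
/- Let k be a field of characteristic 0 and H the Sweedler 4-dimensional Hopf algebra (generated by group-like g with g² = 1 and (1, g)-primitive x with x² = 0, gx = -xg). For every ν ∈ k there is a coquasitriangular structure R_ν on H determined by R(g, g) = -1, R(g, x) = R(x, g) = 0, R(x, x) = ν, R(gx, x) = -ν, R(x, gx) = ν, R(gx, gx) = ν, and these exhaust all coquasitriangular structures with R(g, g) = -1. -/
open TensorProduct Coalgebra

section Aux

variable {k H : Type*} [CommSemiring k] [Semiring H] [Bialgebra k H]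

/-- The right-hand side of `prod_left` as a bilinear map. -/
noncomputable def convRHS (R : H →ₗ[k] H →ₗ[k] k) : H →ₗ[k] H →ₗ[k] (H →ₗ[k] k) :=
  LinearMap.mk₂ k
    (fun a c => LinearMap.mul' k k ∘ₗ TensorProduct.map (R a) (R c) ∘ₗ Coalgebra.comul)
    (fun a a' c => by
      ext h
      simp [map_add, TensorProduct.map_add_left])
    (fun s a c => by
      ext h
      simp [map_smul, TensorProduct.map_smul_left])
    (fun a c c' => by
      ext h
      simp [map_add, TensorProduct.map_add_right])
    (fun s a c => by
      ext h
      simp [map_smul, TensorProduct.map_smul_right])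

@[simp] lemma convRHS_apply (R : H →ₗ[k] H →ₗ[k] k) (a c : H) :
    convRHS R a c = LinearMap.mul' k k ∘ₗ TensorProduct.map (R a) (R c) ∘ₗ Coalgebra.comul := rfl

/-- The R-matrix of the Sweedler Hopf algebra, indexed by `(i,j)` for `gⁱxʲ`. -/
noncomputable def Rmat {k : Type*} [Field k] (ν : k) :
    Fin 2 × Fin 2 → Fin 2 × Fin 2 → k := fun p q =>
  !![!![(1 : k), 1; 1, -1] p.1 q.1, 0; 0, !![ν, ν; -ν, ν] p.1 q.1] p.2 q.2

end Aux

section SweedlerAux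

variable {k H : Type*} [Field k] [CharZero k] [Ring H] [HopfAlgebra k H]

/-- Auxiliary bundle of element-level data for the Sweedler Hopf algebra together
with the values of a candidate `R`-form. -/
structure SweedlerSetup (k H : Type*) [Field k] [CharZero k] [Ring H]
    [HopfAlgebra k H] where
  g : H
  x : H
  ν : k
  Rm : H →ₗ[k] H →ₗ[k] k
  hg2 : g * g = 1
  hx2 : x * x = 0
  hxg : x * g = -(g * x)
  hggx : g * (g * x) = x
  hgxg : (g * x) * g = -x
  hgxx : (g * x) * x = 0
  hxgx : x * (g * x) = 0
  hgxgx : (g * x) * (g * x) = 0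
  hc1 : Coalgebra.comul (R := k) (1 : H) = (1 : H) ⊗ₜ[k] (1 : H)
  hcg : Coalgebra.comul (R := k) g = g ⊗ₜ[k] g
  hcx : Coalgebra.comul (R := k) x = g ⊗ₜ[k] x + x ⊗ₜ[k] (1 : H)
  hcgx : Coalgebra.comul (R := k) (g * x) = (1 : H) ⊗ₜ[k] (g * x) + (g * x) ⊗ₜ[k] g
  hεg : Coalgebra.counit (R := k) g = 1
  hεx : Coalgebra.counit (R := k) x = 0
  hεgx : Coalgebra.counit (R := k) (g * x) = 0
  Rv11 : Rm 1 1 = 1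
  Rv1g : Rm 1 g = 1
  Rv1x : Rm 1 x = 0
  Rv1gx : Rm 1 (g * x) = 0
  Rvg1 : Rm g 1 = 1
  Rvgg : Rm g g = -1
  Rvgx : Rm g x = 0
  Rvggx : Rm g (g * x) = 0
  Rvx1 : Rm x 1 = 0
  Rvxg : Rm x g = 0
  Rvxx : Rm x x = ν
  Rvxgx : Rm x (g * x) = ν
  Rvgx1 : Rm (g * x) 1 = 0
  Rvgxg : Rm (g * x) g = 0
  Rvgxx : Rm (g * x) x = -ν
  Rvgxgx : Rm (g * x) (g * x) = ν

namespace SweedlerSetup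

variable (S : SweedlerSetup k H) (b : Module.Basis (Fin 2 × Fin 2) k H)

set_option maxHeartbeats 2000000 in
lemma invl (hb : ∀ p, b p = S.g ^ (p.1 : ℕ) * S.x ^ (p.2 : ℕ)) :
    convProd k (TensorProduct.lift S.Rm) (TensorProduct.lift S.Rm.flip)
      = Coalgebra.counit (R := k) (A := H ⊗[k] H) := by
  apply (b.tensorProduct b).ext
  rintro ⟨p, q⟩
  rw [Module.Basis.tensorProduct_apply]
  fin_cases p <;> fin_cases q <;>
    (simp only [convProd, LinearMap.comp_apply, TensorProduct.comul_tmul, AlgebraTensorModule.tensorTensorTensorComm_tmul,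
      TensorProduct.counit_tmul, smul_eq_mul, hb, Fin.val_zero, Fin.val_one,
      pow_zero, pow_one, one_mul, mul_one, S.hcg, S.hcx, S.hcgx, S.hc1,
      TensorProduct.map_tmul, TensorProduct.tmul_add, TensorProduct.add_tmul, map_add,
      TensorProduct.tensorTensorTensorComm_tmul, TensorProduct.lift.tmul,
      LinearMap.mul'_apply, LinearEquiv.coe_coe, LinearMap.flip_apply,
      S.hεg, S.hεx, S.hεgx, Bialgebra.counit_one,
      S.Rv11, S.Rv1g, S.Rv1x, S.Rv1gx, S.Rvg1, S.Rvgg, S.Rvgx, S.Rvggx, S.Rvx1, S.Rvxg,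
      S.Rvxx, S.Rvxgx, S.Rvgx1, S.Rvgxg, S.Rvgxx, S.Rvgxgx]
     try ring)

set_option maxHeartbeats 2000000 in
lemma invr (hb : ∀ p, b p = S.g ^ (p.1 : ℕ) * S.x ^ (p.2 : ℕ)) :
    convProd k (TensorProduct.lift S.Rm.flip) (TensorProduct.lift S.Rm)
      = Coalgebra.counit (R := k) (A := H ⊗[k] H) := by
  apply (b.tensorProduct b).ext
  rintro ⟨p, q⟩
  rw [Module.Basis.tensorProduct_apply]
  fin_cases p <;> fin_cases q <;>
    (simp only [convProd, LinearMap.comp_apply, TensorProduct.comul_tmul, AlgebraTensorModule.tensorTensorTensorComm_tmul,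
      TensorProduct.counit_tmul, smul_eq_mul, hb, Fin.val_zero, Fin.val_one,
      pow_zero, pow_one, one_mul, mul_one, S.hcg, S.hcx, S.hcgx, S.hc1,
      TensorProduct.map_tmul, TensorProduct.tmul_add, TensorProduct.add_tmul, map_add,
      TensorProduct.tensorTensorTensorComm_tmul, TensorProduct.lift.tmul,
      LinearMap.mul'_apply, LinearEquiv.coe_coe, LinearMap.flip_apply,
      S.hεg, S.hεx, S.hεgx, Bialgebra.counit_one,
      S.Rv11, S.Rv1g, S.Rv1x, S.Rv1gx, S.Rvg1, S.Rvgg, S.Rvgx, S.Rvggx, S.Rvx1, S.Rvxg,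
      S.Rvxx, S.Rvxgx, S.Rvgx1, S.Rvgxg, S.Rvgxx, S.Rvgxgx]
     try ring)

set_option maxHeartbeats 3000000 in
lemma plmap (hb : ∀ p, b p = S.g ^ (p.1 : ℕ) * S.x ^ (p.2 : ℕ)) :
    (LinearMap.mul k H).compr₂ S.Rm = convRHS S.Rm := by
  apply b.ext; intro p; apply b.ext; intro q; apply b.ext; intro r
  fin_cases p <;> fin_cases q <;> fin_cases r <;>
    (simp only [LinearMap.compr₂_apply, LinearMap.mul_apply', convRHS_apply,
      LinearMap.comp_apply, hb, Fin.val_zero, Fin.val_one, pow_zero, pow_one,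
      one_mul, mul_one, S.hg2, S.hx2, S.hxg, S.hggx, S.hgxg, S.hgxx, S.hxgx, S.hgxgx,
      map_neg, LinearMap.neg_apply, map_zero, LinearMap.zero_apply, neg_neg,
      S.hcg, S.hcx, S.hcgx, S.hc1,
      TensorProduct.map_tmul, TensorProduct.tmul_add, TensorProduct.add_tmul, map_add,
      LinearMap.mul'_apply,
      S.Rv11, S.Rv1g, S.Rv1x, S.Rv1gx, S.Rvg1, S.Rvgg, S.Rvgx, S.Rvggx, S.Rvx1, S.Rvxg,
      S.Rvxx, S.Rvxgx, S.Rvgx1, S.Rvgxg, S.Rvgxx, S.Rvgxgx]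
     try ring)

set_option maxHeartbeats 3000000 in
lemma prmap (hb : ∀ p, b p = S.g ^ (p.1 : ℕ) * S.x ^ (p.2 : ℕ)) :
    (LinearMap.mul k H).compr₂ S.Rm.flip = (convRHS S.Rm.flip).flip := by
  apply b.ext; intro p; apply b.ext; intro q; apply b.ext; intro r
  fin_cases p <;> fin_cases q <;> fin_cases r <;>
    (simp only [LinearMap.compr₂_apply, LinearMap.mul_apply', convRHS_apply,
      LinearMap.comp_apply, LinearMap.flip_apply, hb, Fin.val_zero, Fin.val_one,
      pow_zero, pow_one,
      one_mul, mul_one, S.hg2, S.hx2, S.hxg, S.hggx, S.hgxg, S.hgxx, S.hxgx, S.hgxgx,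
      map_neg, LinearMap.neg_apply, map_zero, LinearMap.zero_apply, neg_neg,
      S.hcg, S.hcx, S.hcgx, S.hc1,
      TensorProduct.map_tmul, TensorProduct.tmul_add, TensorProduct.add_tmul, map_add,
      LinearMap.mul'_apply,
      S.Rv11, S.Rv1g, S.Rv1x, S.Rv1gx, S.Rvg1, S.Rvgg, S.Rvgx, S.Rvggx, S.Rvx1, S.Rvxg,
      S.Rvxx, S.Rvxgx, S.Rvgx1, S.Rvgxg, S.Rvgxx, S.Rvgxgx]
     try ring)

set_option maxHeartbeats 2000000 in
lemma comm (hb : ∀ p, b p = S.g ^ (p.1 : ℕ) * S.x ^ (p.2 : ℕ)) :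
    (TensorProduct.rid k H).toLinearMap
        ∘ₗ TensorProduct.map (swapMul k H) (TensorProduct.lift S.Rm)
        ∘ₗ Coalgebra.comul (R := k) (A := H ⊗[k] H)
      = (TensorProduct.lid k H).toLinearMap
        ∘ₗ TensorProduct.map (TensorProduct.lift S.Rm) (LinearMap.mul' k H)
        ∘ₗ Coalgebra.comul (R := k) (A := H ⊗[k] H) := by
  apply (b.tensorProduct b).ext
  rintro ⟨p, q⟩
  rw [Module.Basis.tensorProduct_apply]
  fin_cases p <;> fin_cases q <;>
    (simp only [swapMul, LinearMap.comp_apply, TensorProduct.comul_tmul, AlgebraTensorModule.tensorTensorTensorComm_tmul,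
      hb, Fin.val_zero, Fin.val_one, pow_zero, pow_one, one_mul, mul_one,
      S.hg2, S.hx2, S.hxg, S.hggx, S.hgxg, S.hgxx, S.hxgx, S.hgxgx,
      S.hcg, S.hcx, S.hcgx, S.hc1,
      TensorProduct.map_tmul, TensorProduct.tmul_add, TensorProduct.add_tmul, map_add,
      TensorProduct.tensorTensorTensorComm_tmul, TensorProduct.lift.tmul,
      LinearMap.mul'_apply, LinearEquiv.coe_coe, TensorProduct.comm_tmul,
      TensorProduct.lid_tmul, TensorProduct.rid_tmul,
      S.Rv11, S.Rv1g, S.Rv1x, S.Rv1gx, S.Rvg1, S.Rvgg, S.Rvgx, S.Rvggx, S.Rvx1, S.Rvxg,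
      S.Rvxx, S.Rvxgx, S.Rvgx1, S.Rvgxg, S.Rvgxx, S.Rvgxgx,
      TensorProduct.zero_tmul, TensorProduct.tmul_zero, TensorProduct.neg_tmul,
      TensorProduct.tmul_neg, map_neg, neg_neg, neg_zero,
      one_smul, neg_smul, smul_neg, zero_smul, smul_zero, smul_smul,
      add_zero, zero_add, mul_one, one_mul, mul_zero, zero_mul, neg_mul, mul_neg]
     try module)

end SweedlerSetup

end SweedlerAux

/-- On the Sweedler 4-dimensional Hopf algebra, for every
`ν ∈ k` there is a coquasitriangular structure with `R(g,g) = -1`,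
`R(g,x) = R(x,g) = 0`, `R(x,x) = ν`, `R(gx,x) = -ν`, `R(x,gx) = ν`,
`R(gx,gx) = ν`, and these exhaust all coquasitriangular structures with
`R(g,g) = -1`. -/
theorem sweedler_coquasitriangular_classification (k H : Type*) [Field k]
    [CharZero k] [Ring H] [HopfAlgebra k H]
    (g x : H) (hg : IsGroupLike k H g) (hx : IsSkewPrimitive k H g x)
    (hg2 : g * g = 1) (hx2 : x * x = 0) (hgx : g * x = -(x * g))
    (hbasis : ∃ b : Module.Basis (Fin 2 × Fin 2) k H,
      ∀ p, b p = g ^ (p.1 : ℕ) * x ^ (p.2 : ℕ)) :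
    (∀ ν : k, ∃ Q : CoquasiTriangular k H,
      Q.R g g = -1 ∧ Q.R g x = 0 ∧ Q.R x g = 0 ∧ Q.R x x = ν ∧
      Q.R (g * x) x = -ν ∧ Q.R x (g * x) = ν ∧ Q.R (g * x) (g * x) = ν) ∧
    (∀ Q : CoquasiTriangular k H, Q.R g g = -1 →
      Q.R g x = 0 ∧ Q.R x g = 0 ∧ Q.R (g * x) x = -(Q.R x x) ∧
      Q.R x (g * x) = Q.R x x ∧ Q.R (g * x) (g * x) = Q.R x x) := by
  obtain ⟨b, hb⟩ := hbasis
  obtain ⟨hεg, hcg⟩ := hg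
  have hcx : Coalgebra.comul (R := k) x = g ⊗ₜ[k] x + x ⊗ₜ[k] (1 : H) := hx
  -- multiplication table
  have hxg : x * g = -(g * x) := by rw [hgx, neg_neg]
  have hggx : g * (g * x) = x := by rw [← mul_assoc, hg2, one_mul]
  have hgxg : (g * x) * g = -x := by rw [mul_assoc, hxg, mul_neg, hggx]
  have hgxx : (g * x) * x = 0 := by rw [mul_assoc, hx2, mul_zero]
  have hxgx : x * (g * x) = 0 := by rw [← mul_assoc, hxg, neg_mul, hgxx, neg_zero]
  have hgxgx : (g * x) * (g * x) = 0 := by rw [mul_assoc, hxgx, mul_zero]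
  -- basis values
  have hb1 : b (0, 0) = 1 := by simpa using hb (0, 0)
  have hbg : b (1, 0) = g := by simpa using hb (1, 0)
  have hbx : b (0, 1) = x := by simpa using hb (0, 1)
  have hbgx : b (1, 1) = g * x := by simpa using hb (1, 1)
  have hgne : g ≠ 0 := hbg ▸ b.ne_zero (1, 0)
  -- counit values
  have hεx : Coalgebra.counit (R := k) x = 0 := by
    have h := LinearMap.congr_fun (Coalgebra.lTensor_counit_comp_comul (R := k) (A := H)) x
    simp only [LinearMap.comp_apply, hcx, map_add, LinearMap.lTensor_tmul,
      TensorProduct.mk_apply, LinearMap.flip_apply, Bialgebra.counit_one] at h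
    have h2 := congrArg (TensorProduct.rid k H) h
    simp only [map_add, TensorProduct.rid_tmul, one_smul] at h2
    rcases smul_eq_zero.mp (add_eq_right.mp h2) with h3 | h3
    · exact h3
    · exact absurd h3 hgne
  have hεgx : Coalgebra.counit (R := k) (g * x) = 0 := by
    rw [Bialgebra.counit_mul, hεx, mul_zero]
  have hc1 : Coalgebra.comul (R := k) (1 : H) = (1 : H) ⊗ₜ[k] (1 : H) := by
    rw [Bialgebra.comul_one, Algebra.TensorProduct.one_def]
  have hcgx : Coalgebra.comul (R := k) (g * x)
      = (1 : H) ⊗ₜ[k] (g * x) + (g * x) ⊗ₜ[k] g := by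
    rw [Bialgebra.comul_mul, hcg, hcx, mul_add, Algebra.TensorProduct.tmul_mul_tmul,
      Algebra.TensorProduct.tmul_mul_tmul, hg2, mul_one]
  constructor
  · -- existence
    intro ν
    obtain ⟨Rm, hRb⟩ : ∃ Rm : H →ₗ[k] H →ₗ[k] k,
        ∀ p q, Rm (b p) (b q) = Rmat ν p q :=
      ⟨b.constr k fun p => b.constr k fun q => Rmat ν p q,
        fun p q => by rw [Module.Basis.constr_basis, Module.Basis.constr_basis]⟩
    have Rv11 : Rm 1 1 = 1 := by rw [← hb1, hRb]; norm_num [Rmat]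
    have Rv1g : Rm 1 g = 1 := by rw [← hb1, ← hbg, hRb]; norm_num [Rmat]
    have Rv1x : Rm 1 x = 0 := by rw [← hb1, ← hbx, hRb]; norm_num [Rmat]
    have Rv1gx : Rm 1 (g * x) = 0 := by rw [← hbgx, ← hb1, hRb]; norm_num [Rmat]
    have Rvg1 : Rm g 1 = 1 := by rw [← hb1, ← hbg, hRb]; norm_num [Rmat]
    have Rvgg : Rm g g = -1 := by rw [← hbg, hRb]; norm_num [Rmat]
    have Rvgx : Rm g x = 0 := by rw [← hbg, ← hbx, hRb]; norm_num [Rmat]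
    have Rvggx : Rm g (g * x) = 0 := by rw [← hbgx, ← hbg, hRb]; norm_num [Rmat]
    have Rvx1 : Rm x 1 = 0 := by rw [← hb1, ← hbx, hRb]; norm_num [Rmat]
    have Rvxg : Rm x g = 0 := by rw [← hbg, ← hbx, hRb]; norm_num [Rmat]
    have Rvxx : Rm x x = ν := by rw [← hbx, hRb]; norm_num [Rmat]
    have Rvxgx : Rm x (g * x) = ν := by rw [← hbgx, ← hbx, hRb]; norm_num [Rmat]
    have Rvgx1 : Rm (g * x) 1 = 0 := by rw [← hbgx, ← hb1, hRb]; norm_num [Rmat]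
    have Rvgxg : Rm (g * x) g = 0 := by rw [← hbgx, ← hbg, hRb]; norm_num [Rmat]
    have Rvgxx : Rm (g * x) x = -ν := by rw [← hbgx, ← hbx, hRb]; norm_num [Rmat]
    have Rvgxgx : Rm (g * x) (g * x) = ν := by rw [← hbgx, hRb]; norm_num [Rmat]
    let S : SweedlerSetup k H :=
      { g := g, x := x, ν := ν, Rm := Rm,
        hg2 := hg2, hx2 := hx2, hxg := hxg, hggx := hggx, hgxg := hgxg, hgxx := hgxx,
        hxgx := hxgx, hgxgx := hgxgx, hc1 := hc1, hcg := hcg, hcx := hcx, hcgx := hcgx,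
        hεg := hεg, hεx := hεx, hεgx := hεgx,
        Rv11 := Rv11, Rv1g := Rv1g, Rv1x := Rv1x, Rv1gx := Rv1gx, Rvg1 := Rvg1,
        Rvgg := Rvgg, Rvgx := Rvgx, Rvggx := Rvggx, Rvx1 := Rvx1, Rvxg := Rvxg,
        Rvxx := Rvxx, Rvxgx := Rvxgx, Rvgx1 := Rvgx1, Rvgxg := Rvgxg, Rvgxx := Rvgxx,
        Rvgxgx := Rvgxgx }
    have hPL : ∀ a c : H, Rm (a * c)
        = LinearMap.mul' k k ∘ₗ TensorProduct.map (Rm a) (Rm c) ∘ₗ Coalgebra.comul := by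
      intro a c
      have h := DFunLike.congr_fun (DFunLike.congr_fun (S.plmap b hb) a) c
      simpa [LinearMap.compr₂_apply, LinearMap.mul_apply'] using h
    have hPR : ∀ c d : H, Rm.flip (c * d)
        = LinearMap.mul' k k ∘ₗ TensorProduct.map (Rm.flip d) (Rm.flip c)
            ∘ₗ Coalgebra.comul := by
      intro c d
      have h := DFunLike.congr_fun (DFunLike.congr_fun (S.prmap b hb) c) d
      simpa [LinearMap.compr₂_apply, LinearMap.mul_apply', LinearMap.flip_apply] using h
    exact ⟨⟨Rm, Rm.flip, S.invl b hb, S.invr b hb, hPL, hPR, S.comm b hb⟩,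
      Rvgg, Rvgx, Rvxg, Rvxx, Rvgxx, Rvxgx, Rvgxgx⟩
  · -- uniqueness
    intro Q hQ
    have pl : ∀ a c e : H, Q.R (a * c) e
        = LinearMap.mul' k k (TensorProduct.map (Q.R a) (Q.R c) (Coalgebra.comul e)) := by
      intro a c e
      rw [Q.prod_left a c]
      simp [LinearMap.comp_apply]
    have pr : ∀ c d a : H, Q.R a (c * d)
        = LinearMap.mul' k k (TensorProduct.map (Q.R.flip d) (Q.R.flip c)
            (Coalgebra.comul a)) := by
      intro c d a
      have h := LinearMap.congr_fun (Q.prod_right c d) a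
      simpa [LinearMap.flip_apply, LinearMap.comp_apply] using h
    have e1 : Q.R 1 g = 1 := by
      have h := pl g g g
      rw [hg2, hcg] at h
      simp only [TensorProduct.map_tmul, LinearMap.mul'_apply, hQ] at h
      linear_combination h
    have e2 : Q.R g 1 = 1 := by
      have h := pr g g g
      rw [hg2, hcg] at h
      simp only [TensorProduct.map_tmul, LinearMap.mul'_apply, LinearMap.flip_apply, hQ] at h
      linear_combination h
    have e4 : Q.R 1 x = 0 := by
      have h := pl g g x
      rw [hg2, hcx] at h
      simp only [map_add, TensorProduct.map_tmul, LinearMap.mul'_apply, hQ, e2] at h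
      linear_combination h
    have exg : Q.R x g = 0 := by
      have h1 := pl g x g
      have h2 := pl x g g
      have hneg : Q.R (g * x) g = -(Q.R (x * g) g) := by rw [hgx]; simp
      rw [hcg] at h1 h2
      simp only [TensorProduct.map_tmul, LinearMap.mul'_apply, hQ] at h1 h2
      linear_combination (h1 - hneg + h2) / 2
    have egx : Q.R g x = 0 := by
      have h1 := pr g x g
      have h2 := pr x g g
      have hneg : Q.R g (g * x) = -(Q.R g (x * g)) := by rw [hgx]; simp
      rw [hcg] at h1 h2
      simp only [TensorProduct.map_tmul, LinearMap.mul'_apply, LinearMap.flip_apply, hQ]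
        at h1 h2
      linear_combination (h1 - hneg + h2) / 2
    have r1 : Q.R (g * x) x = -(Q.R x x) := by
      have h := pl g x x
      rw [hcx] at h
      simp only [map_add, TensorProduct.map_tmul, LinearMap.mul'_apply, hQ, egx] at h
      linear_combination h
    have r2 : Q.R x (g * x) = Q.R x x := by
      have h := pr g x x
      rw [hcx] at h
      simp only [map_add, TensorProduct.map_tmul, LinearMap.mul'_apply, LinearMap.flip_apply,
        hQ, egx, exg, e1] at h
      linear_combination h
    have r3 : Q.R (g * x) (g * x) = Q.R x x := by
      have h := pr g x (g * x)
      rw [hcgx] at h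
      simp only [map_add, TensorProduct.map_tmul, LinearMap.mul'_apply, LinearMap.flip_apply,
        hQ, e4, r1] at h
      linear_combination h
    exact ⟨egx, exg, r1, r2, r3⟩
end

section
/- Let H be a Hopf algebra, g a group-like element, and x a nonzero (1, g)-primitive element with x² = 0 and gx = -xg over a field of characteristic 0. Suppose R is a coquasitriangular structure on the sub-Hopf algebra generated by g and x, with R(g, g) = -1. Then R(x, x)(1 - g²) = 0; in particular if g² ≠ 1 then R(x, x) = 0. -/
open TensorProduct Coalgebra

/-- If `x ≠ 0` is `(1,g)`-primitive with `x² = 0` and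
`gx = -xg`, and `R` is a coquasitriangular structure with `R(g,g) = -1`
(char `k` = 0), then `R(x,x)(1 - g²) = 0`; in particular if `g² ≠ 1` then
`R(x,x) = 0`. -/
theorem Rxx_smul_one_sub_gsq_eq_zero (k H : Type*) [Field k] [CharZero k]
    [Ring H] [HopfAlgebra k H] (Q : CoquasiTriangular k H) (g x : H)
    (hg : IsGroupLike k H g) (hx : IsSkewPrimitive k H g x)
    (hx0 : x ≠ 0) (hx2 : x * x = 0) (hgx : g * x = -(x * g))
    (hgg : Q.R g g = -1) :
    Q.R x x • ((1 : H) - g * g) = 0 ∧ (g * g ≠ 1 → Q.R x x = 0) := by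
  have hgc : Coalgebra.comul (R := k) g = g ⊗ₜ[k] g := hg.2
  have hxc : Coalgebra.comul (R := k) x = g ⊗ₜ[k] x + x ⊗ₜ[k] (1 : H) := hx
  have h1c : Coalgebra.comul (R := k) (1 : H) = (1 : H) ⊗ₜ[k] (1 : H) := by
    rw [Bialgebra.comul_one]; exact Algebra.TensorProduct.one_def
  -- R(g,1) = 1
  have hRg1 : Q.R g (1 : H) = 1 := by
    have h := LinearMap.congr_fun (Q.prod_right g 1) g
    simp [hgc, hgg] at h
    exact h.symm
  -- R(1,g) = 1
  have hR1g : Q.R (1 : H) g = 1 := by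
    have h := LinearMap.congr_fun (Q.prod_left g 1) g
    simp [hgc, hgg] at h
    exact h.symm
  -- R(1,1) = 1
  have hR11 : Q.R (1 : H) (1 : H) = 1 := by
    have h := LinearMap.congr_fun (Q.prod_left g 1) 1
    simp [h1c, hRg1] at h
    exact h.symm
  -- R(x,1) = 0
  have hRx1 : Q.R x (1 : H) = 0 := by
    have h := LinearMap.congr_fun (Q.prod_right 1 1) x
    simp [hxc, hRg1, hR11] at h
    exact h
  -- R(1,x) = 0
  have hR1x : Q.R (1 : H) x = 0 := by
    have h := LinearMap.congr_fun (Q.prod_left 1 1) x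
    simp [hxc, hR1g, hR11] at h
    exact h
  -- R(x,g) = 0
  have hRxg : Q.R x g = 0 := by
    have h := LinearMap.congr_fun (Q.prod_left x x) g
    rw [hx2] at h
    simp [hgc] at h
    exact h
  -- R(g,x) = 0
  have hRgx : Q.R g x = 0 := by
    have h := LinearMap.congr_fun (Q.prod_right x x) g
    rw [hx2] at h
    simp [hgc] at h
    exact h
  -- main equation from comm at x ⊗ x
  have hmain : Q.R x x • (g * g) = Q.R x x • (1 : H) := by
    have h := LinearMap.congr_fun Q.comm (x ⊗ₜ[k] x)
    simp [TensorProduct.comul_def, hxc, swapMul,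
      tmul_add, add_tmul, hRx1, hR1x, hR11, hRxg, hRgx, hgg, hx2] at h
    convert h using 2
  constructor
  · rw [smul_sub, hmain, sub_self]
  · intro hne
    have h0 : Q.R x x • ((1 : H) - g * g) = 0 := by rw [smul_sub, hmain, sub_self]
    rcases smul_eq_zero.mp h0 with h | h
    · exact h
    · exact absurd (by rw [sub_eq_zero] at h; exact h.symm : g * g = 1) hne
end
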